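/- Let w ∈ W be generic for the toric ideal I_V. Then there exists a nonnegative weight vector c ∈ ℝ^m_{≥0} such that in_w(I_V) = in_c(I_V). -/

import Mathlib

open Matrix MvPolynomial

/-- The toric ideal of `V`: kernel of `xⱼ ↦ t^{vⱼ}` into Laurent polynomials. -/
noncomputable def toricIdeal (K : Type*) [Field K] {n m : ℕ}
    (V : Matrix (Fin n) (Fin m) ℤ) : Ideal (MvPolynomial (Fin m) K) :=
  RingHom.ker (MvPolynomial.aeval
    (fun j => AddMonoidAlgebra.of' K (Fin n → ℤ) (fun i => V i j)) :
    MvPolynomial (Fin m) K →ₐ[K] AddMonoidAlgebra K (Fin n → ℤ))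

/-- The `w`-weight of an exponent vector `a`: `wᵀ a`. -/
noncomputable def wdeg {m : ℕ} (w : Fin m → ℝ) (a : Fin m →₀ ℕ) : ℝ :=
  ∑ i, w i * (a i : ℝ)

/-- The initial form `in_w(f)`: the sum of the terms of `f` of maximal `w`-weight. -/
noncomputable def initialForm {K : Type*} [Field K] {m : ℕ} (w : Fin m → ℝ)
    (f : MvPolynomial (Fin m) K) : MvPolynomial (Fin m) K :=
  ∑ a ∈ f.support.filter (fun a => ∀ b ∈ f.support, wdeg w b ≤ wdeg w a),
    MvPolynomial.monomial a (f.coeff a)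

/-- The initial ideal `in_w(I)`: the ideal generated by the initial forms of elements of `I`. -/
noncomputable def initialIdealW {K : Type*} [Field K] {m : ℕ} (w : Fin m → ℝ)
    (I : Ideal (MvPolynomial (Fin m) K)) : Ideal (MvPolynomial (Fin m) K) :=
  Ideal.span {g | ∃ f ∈ I, g = initialForm w f}

/-- A monomial ideal: an ideal generated by monomials. -/
def IsMonomialIdeal {K : Type*} [Field K] {m : ℕ}
    (J : Ideal (MvPolynomial (Fin m) K)) : Prop :=
  ∃ S : Set (Fin m →₀ ℕ),
    J = Ideal.span ((fun a => MvPolynomial.monomial a (1 : K)) '' S)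

/-- The cone `U = ker_ℝ(V) ∩ ℝᵐ_{≥0}`. -/
def coneU {n m : ℕ} (V : Matrix (Fin n) (Fin m) ℤ) : Set (Fin m → ℝ) :=
  {u | (V.map (Int.cast : ℤ → ℝ)) *ᵥ u = 0 ∧ ∀ i, 0 ≤ u i}

/-- The Gröbner region `W`: weight vectors whose linear functional is bounded below on `U`. -/
def coneW {n m : ℕ} (V : Matrix (Fin n) (Fin m) ℤ) : Set (Fin m → ℝ) :=
  {w | ∃ c : ℝ, ∀ u ∈ coneU V, c ≤ w ⬝ᵥ u}

open Pointwise
open scoped InnerProductSpace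

set_option maxHeartbeats 1000000

section Auxiliary

lemma farkas_cone_closed {n m : ℕ} (A : Matrix (Fin n) (Fin m) ℝ) (hm : 0 < m)
    (u0 : Fin m → ℝ) (hu0 : ∀ i, 0 < u0 i) (hu0A : A *ᵥ u0 = 0) :
    IsClosed {x : EuclideanSpace ℝ (Fin m) | ∃ l : Fin n → ℝ, ∀ i, ∑ k, l k * A k i ≤ x i} := by
  set Cset : Set (EuclideanSpace ℝ (Fin m)) :=
    {x | ∃ l : Fin n → ℝ, ∀ i, ∑ k, l k * A k i ≤ x i} with hCset
  set L : (Fin n → ℝ) →ₗ[ℝ] EuclideanSpace ℝ (Fin m) :=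
    { toFun := fun l => WithLp.toLp 2 (fun i => ∑ k, l k * A k i : Fin m → ℝ)
      map_add' := by
        intro a b; ext i
        simp [add_mul, Finset.sum_add_distrib]
      map_smul' := by
        intro c a; ext i
        simp [Finset.mul_sum, mul_assoc] } with hL
  have hLapply : ∀ l i, L l i = ∑ k, l k * A k i := fun l i => rfl
  obtain ⟨i0, -, hi0⟩ := Finset.exists_min_image (Finset.univ : Finset (Fin m)) u0
    ⟨⟨0, hm⟩, Finset.mem_univ _⟩
  set δ := u0 i0 with hδ
  have hδpos : 0 < δ := hu0 i0
  have hδle : ∀ i, δ ≤ u0 i := fun i => hi0 i (Finset.mem_univ i)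
  have hLu0 : ∀ l : Fin n → ℝ, ∑ i, L l i * u0 i = 0 := by
    intro l
    have h0 : ∀ k, ∑ i, A k i * u0 i = 0 := by
      intro k
      have := congrFun hu0A k
      simpa [Matrix.mulVec, dotProduct] using this
    simp only [hLapply]
    calc ∑ i, (∑ k, l k * A k i) * u0 i = ∑ i, ∑ k, l k * (A k i * u0 i) := by
          refine Finset.sum_congr rfl fun i _ => ?_
          rw [Finset.sum_mul]
          exact Finset.sum_congr rfl fun k _ => by ring
      _ = ∑ k, ∑ i, l k * (A k i * u0 i) := Finset.sum_comm
      _ = ∑ k, l k * ∑ i, A k i * u0 i := by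
          refine Finset.sum_congr rfl fun k _ => ?_
          rw [Finset.mul_sum]
      _ = 0 := by simp [h0]
  refine isClosed_of_closure_subset ?_
  intro x hx
  set M := (∑ i, x i * u0 i) + 1 with hM
  set O : Set (EuclideanSpace ℝ (Fin m)) := {y | ∑ i, y i * u0 i < M} with hO
  have hcont : Continuous fun y : EuclideanSpace ℝ (Fin m) => ∑ i, y i * u0 i :=
    continuous_finset_sum _ fun i _ =>
      (((continuous_apply i).comp (PiLp.continuous_ofLp 2 _)).mul continuous_const)
  have hOopen : IsOpen O := isOpen_lt hcont continuous_const
  have hxO : x ∈ O := by simp only [hO, Set.mem_setOf_eq, hM]; linarith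
  set B := M / δ with hB
  set K0 : Set (EuclideanSpace ℝ (Fin m)) := {p | ∀ i, p i ∈ Set.Icc (0:ℝ) B} with hK0
  have hK0compact : IsCompact K0 := by
    have : K0 = (WithLp.ofLp : EuclideanSpace ℝ (Fin m) → Fin m → ℝ) ⁻¹' Set.pi Set.univ (fun _ => Set.Icc (0:ℝ) B) := by
      ext p; simp only [hK0, Set.mem_setOf_eq, Set.mem_preimage, Set.mem_pi, Set.mem_univ, forall_true_left]
    rw [this]
    exact (PiLp.homeomorph 2 _).isCompact_preimage.mpr (isCompact_univ_pi (fun i => isCompact_Icc))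
  set S : Submodule ℝ (EuclideanSpace ℝ (Fin m)) := LinearMap.range L with hS
  have hSclosed : IsClosed (S : Set (EuclideanSpace ℝ (Fin m))) :=
    Submodule.closed_of_finiteDimensional S
  have hsum_closed : IsClosed ((S : Set (EuclideanSpace ℝ (Fin m))) + K0) :=
    hSclosed.add_right_of_isCompact hK0compact
  have hsub : Cset ∩ O ⊆ (S : Set (EuclideanSpace ℝ (Fin m))) + K0 := by
    rintro y ⟨⟨l, hl⟩, hyO⟩
    have hyu0 : ∑ i, y i * u0 i < M := hyO
    set p : EuclideanSpace ℝ (Fin m) := WithLp.toLp 2 (fun i => y i - L l i) with hp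
    have hpnonneg : ∀ i, 0 ≤ p i := fun i => by
      have := hl i; simp only [hp]; rw [hLapply]; linarith
    have hpsum : ∑ i, p i * u0 i < M := by
      have : ∑ i, p i * u0 i = ∑ i, y i * u0 i - ∑ i, L l i * u0 i := by
        rw [← Finset.sum_sub_distrib]
        exact Finset.sum_congr rfl fun i _ => by simp [hp]; ring
      rw [this, hLu0]
      linarith
    have hpB : ∀ i, p i ≤ B := by
      intro i
      have h1 : p i * δ ≤ p i * u0 i := by
        have := hδle i; have := hpnonneg i; nlinarith
      have h2 : p i * u0 i ≤ ∑ j, p j * u0 j := by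
        refine Finset.single_le_sum (f := fun j => p j * u0 j) ?_ (Finset.mem_univ i)
        intro j _
        exact mul_nonneg (hpnonneg j) (le_of_lt (hu0 j))
      rw [hB, le_div_iff₀ hδpos]
      linarith
    have hymem : y = L l + p := by
      ext i
      simp [hp]
    rw [hymem]
    exact Set.add_mem_add (LinearMap.mem_range_self L l) (fun i => ⟨hpnonneg i, hpB i⟩)
  have hxcl : x ∈ closure (Cset ∩ O) := by
    rw [mem_closure_iff_nhds] at hx ⊢
    intro t ht
    obtain ⟨z, hz1, hz2⟩ := hx (t ∩ O) (Filter.inter_mem ht (hOopen.mem_nhds hxO))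
    exact ⟨z, hz1.1, hz2, hz1.2⟩
  have : x ∈ (S : Set (EuclideanSpace ℝ (Fin m))) + K0 :=
    hsum_closed.closure_subset ((closure_mono hsub) hxcl)
  obtain ⟨s, hsmem, p, hpmem, rfl⟩ := this
  obtain ⟨l, rfl⟩ := hsmem
  exact ⟨l, fun i => by
    have := (hpmem i).1
    have h := hLapply l i
    show (∑ k, l k * A k i) ≤ L l i + p i
    rw [← h]; linarith⟩


lemma farkas {n m : ℕ} (A : Matrix (Fin n) (Fin m) ℝ) (hm : 0 < m)
    (u0 : Fin m → ℝ) (hu0 : ∀ i, 0 < u0 i) (hu0A : A *ᵥ u0 = 0)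
    (w : Fin m → ℝ)
    (hw : ∀ u : Fin m → ℝ, A *ᵥ u = 0 → (∀ i, 0 ≤ u i) → 0 ≤ ∑ i, w i * u i) :
    ∃ l : Fin n → ℝ, ∀ i, ∑ k, l k * A k i ≤ w i := by
  by_contra hcon
  set C : ConvexCone ℝ (EuclideanSpace ℝ (Fin m)) :=
    { carrier := {x | ∃ l : Fin n → ℝ, ∀ i, ∑ k, l k * A k i ≤ x i}
      smul_mem' := by
        rintro c hc x ⟨l, hl⟩
        refine ⟨c • l, fun i => ?_⟩
        have : ∑ k, (c • l) k * A k i = c * ∑ k, l k * A k i := by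
          rw [Finset.mul_sum]
          exact Finset.sum_congr rfl fun k _ => by simp [mul_assoc]
        rw [this]
        have : (c • x) i = c * x i := rfl
        rw [this]
        exact mul_le_mul_of_nonneg_left (hl i) (le_of_lt hc)
      add_mem' := by
        rintro x ⟨l1, hl1⟩ y ⟨l2, hl2⟩
        refine ⟨l1 + l2, fun i => ?_⟩
        have : ∑ k, (l1 + l2) k * A k i = (∑ k, l1 k * A k i) + ∑ k, l2 k * A k i := by
          rw [← Finset.sum_add_distrib]
          exact Finset.sum_congr rfl fun k _ => by simp [add_mul]
        rw [this]
        exact add_le_add (hl1 i) (hl2 i) } with hC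
  have hne : (C : Set (EuclideanSpace ℝ (Fin m))).Nonempty :=
    ⟨0, ⟨0, fun i => by simp⟩⟩
  have hclosed : IsClosed (C : Set (EuclideanSpace ℝ (Fin m))) :=
    farkas_cone_closed A hm u0 hu0 hu0A
  have hwnotmem : (WithLp.toLp 2 w : EuclideanSpace ℝ (Fin m)) ∉ C := fun h => hcon h
  obtain ⟨y, hy1, hy2⟩ :=
    ProperCone.hyperplane_separation' (⟨C.toPointedCone (by exact ⟨0, fun i => by simp⟩), hclosed⟩ : ProperCone ℝ (EuclideanSpace ℝ (Fin m))) hwnotmem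
  -- inner products on EuclideanSpace over ℝ
  have hinner : ∀ a b : EuclideanSpace ℝ (Fin m), ⟪a, b⟫_ℝ = ∑ i, a i * b i := by
    intro a b
    simp [PiLp.inner_apply, RCLike.inner_apply, mul_comm]
  -- y is nonnegative
  have hynn : ∀ i, 0 ≤ y i := by
    intro i
    set x : EuclideanSpace ℝ (Fin m) := WithLp.toLp 2 (fun j => if j = i then 1 else 0) with hx
    have hxC : x ∈ C := ⟨0, fun j => by simp [hx]; positivity⟩
    have := hy1 x hxC
    rw [hinner] at this
    simpa [hx, Finset.sum_ite_eq'] using this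
  -- A y = 0
  have hAy : ∀ k, ∑ i, A k i * y i = 0 := by
    intro k
    have key : ∀ s : ℝ, (WithLp.toLp 2 (fun i => s * A k i)) ∈ C := by
      intro s
      refine ⟨(fun k' => if k' = k then s else 0), fun i => le_of_eq ?_⟩
      rw [Finset.sum_eq_single k]
      · simp
      · intro b _ hb; simp [hb]
      · simp
    have h1 := hy1 _ (key 1)
    have h2 := hy1 _ (key (-1))
    rw [hinner] at h1 h2
    simp only [one_mul, neg_mul] at h1 h2
    have h2' : ∑ i, -(A k i * y i) = -∑ i, A k i * y i := by simp
    rw [h2'] at h2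
    linarith
  have hy0 : A *ᵥ y = 0 := by
    funext k
    simpa [Matrix.mulVec, dotProduct] using hAy k
  have := hw y hy0 hynn
  rw [hinner] at hy2
  have : ∑ i, y i * w i = ∑ i, w i * y i :=
    Finset.sum_congr rfl fun i _ => mul_comm _ _
  linarith [hw y hy0 hynn, hy2, this]


-- degree of an exponent vector under V
noncomputable def degZ {n m : ℕ} (V : Matrix (Fin n) (Fin m) ℤ) (a : Fin m →₀ ℕ) : Fin n → ℤ :=
  fun i => ∑ j, (a j : ℤ) * V i j

noncomputable def homComp (K : Type*) [Field K] {n m : ℕ} (V : Matrix (Fin n) (Fin m) ℤ)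
    (d : Fin n → ℤ) (f : MvPolynomial (Fin m) K) : MvPolynomial (Fin m) K :=
  ∑ a ∈ f.support.filter (fun a => degZ V a = d), MvPolynomial.monomial a (f.coeff a)

lemma prod_single_one {K : Type*} [Field K] {G : Type*} [AddCommMonoid G] {ι : Type*}
    (s : Finset ι) (g : ι → G) :
    (∏ j ∈ s, (AddMonoidAlgebra.single (g j) (1:K) : AddMonoidAlgebra K G))
      = AddMonoidAlgebra.single (∑ j ∈ s, g j) 1 := by
  classical
  induction s using Finset.cons_induction with
  | empty => simp [AddMonoidAlgebra.one_def]
  | cons a s ha ih =>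
      rw [Finset.prod_cons, ih, AddMonoidAlgebra.single_mul_single, Finset.sum_cons, one_mul]

lemma toric_aeval_monomial {K : Type*} [Field K] {n m : ℕ} (V : Matrix (Fin n) (Fin m) ℤ)
    (a : Fin m →₀ ℕ) (c : K) :
    (MvPolynomial.aeval (fun j => AddMonoidAlgebra.of' K (Fin n → ℤ) (fun i => V i j)) :
      MvPolynomial (Fin m) K →ₐ[K] AddMonoidAlgebra K (Fin n → ℤ)) (MvPolynomial.monomial a c)
      = AddMonoidAlgebra.single (degZ V a) c := by
  classical
  rw [MvPolynomial.aeval_monomial]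
  have h1 : (a.prod fun j e => (AddMonoidAlgebra.of' K (Fin n → ℤ) (fun i => V i j)) ^ e)
      = AddMonoidAlgebra.single (degZ V a) (1:K) := by
    rw [Finsupp.prod]
    have hstep : ∀ j ∈ a.support,
        (AddMonoidAlgebra.of' K (Fin n → ℤ) (fun i => V i j)) ^ (a j)
        = AddMonoidAlgebra.single ((a j) • fun i => (V i j : ℤ)) (1:K) := by
      intro j _
      rw [AddMonoidAlgebra.of'_apply, AddMonoidAlgebra.single_pow, one_pow]
    rw [Finset.prod_congr rfl hstep, prod_single_one]
    congr 1
    funext i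
    rw [Finset.sum_apply]
    have : ∀ j ∈ a.support, ((a j) • fun i => (V i j : ℤ)) i = (a j : ℤ) * V i j := by
      intro j _
      simp [nsmul_eq_mul]
    rw [Finset.sum_congr rfl this, degZ]
    refine Finset.sum_subset (Finset.subset_univ _) ?_
    intro j _ hj
    rw [Finsupp.notMem_support_iff] at hj
    simp [hj]
  rw [h1]
  have h2 : (algebraMap K (AddMonoidAlgebra K (Fin n → ℤ))) c
      = AddMonoidAlgebra.single (0 : Fin n → ℤ) c := by
    rw [Algebra.algebraMap_eq_smul_one, AddMonoidAlgebra.one_def, AddMonoidAlgebra.smul_single,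
      smul_eq_mul, mul_one]
  rw [h2, AddMonoidAlgebra.single_mul_single, zero_add, mul_one]

lemma toric_aeval_apply {K : Type*} [Field K] {n m : ℕ} (V : Matrix (Fin n) (Fin m) ℤ)
    (f : MvPolynomial (Fin m) K) :
    (MvPolynomial.aeval (fun j => AddMonoidAlgebra.of' K (Fin n → ℤ) (fun i => V i j)) :
      MvPolynomial (Fin m) K →ₐ[K] AddMonoidAlgebra K (Fin n → ℤ)) f
      = ∑ a ∈ f.support, AddMonoidAlgebra.single (degZ V a) (f.coeff a) := by
  conv_lhs => rw [f.as_sum]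
  rw [map_sum]
  exact Finset.sum_congr rfl fun a _ => toric_aeval_monomial V a _

lemma homComp_mem {K : Type*} [Field K] {n m : ℕ} (V : Matrix (Fin n) (Fin m) ℤ)
    (f : MvPolynomial (Fin m) K) (hf : f ∈ toricIdeal K V) (d : Fin n → ℤ) :
    homComp K V d f ∈ toricIdeal K V := by
  classical
  rw [toricIdeal, RingHom.mem_ker] at hf ⊢
  have h1 : (∑ a ∈ f.support, AddMonoidAlgebra.single (degZ V a) (f.coeff a)
      : AddMonoidAlgebra K (Fin n → ℤ)) = 0 := by
    rw [← toric_aeval_apply]; exact hf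
  have h1' : (∑ a ∈ f.support, Finsupp.single (degZ V a) (f.coeff a) : (Fin n → ℤ) →₀ K) = 0 := by
    simpa only [AddMonoidAlgebra.coeff_sum, AddMonoidAlgebra.coeff_single, AddMonoidAlgebra.coeff_zero] using congrArg AddMonoidAlgebra.coeff h1
  have h2 := DFunLike.congr_fun h1' d
  rw [Finsupp.finset_sum_apply] at h2
  simp only [Finsupp.single_apply, Finsupp.coe_zero, Pi.zero_apply] at h2
  rw [Finset.sum_ite, Finset.sum_const_zero, add_zero] at h2
  -- h2 : ∑ a ∈ f.support.filter (degZ V a = d), f.coeff a = 0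
  rw [homComp, map_sum]
  have h3 : ∀ a ∈ f.support.filter (fun a => degZ V a = d),
      (MvPolynomial.aeval (fun j => AddMonoidAlgebra.of' K (Fin n → ℤ) (fun i => V i j)) :
        MvPolynomial (Fin m) K →ₐ[K] AddMonoidAlgebra K (Fin n → ℤ))
        (MvPolynomial.monomial a (f.coeff a))
      = AddMonoidAlgebra.single d (f.coeff a) := by
    intro a ha
    rw [toric_aeval_monomial, (Finset.mem_filter.mp ha).2]
  rw [Finset.sum_congr rfl h3]
  simp only [← AddMonoidAlgebra.ofCoeff_single]
  rw [← AddMonoidAlgebra.ofCoeff_sum, ← Finsupp.single_finset_sum, h2, Finsupp.single_zero, AddMonoidAlgebra.ofCoeff_zero]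

lemma coeff_homComp {K : Type*} [Field K] {n m : ℕ} (V : Matrix (Fin n) (Fin m) ℤ)
    (d : Fin n → ℤ) (f : MvPolynomial (Fin m) K) (b : Fin m →₀ ℕ) :
    (homComp K V d f).coeff b = if degZ V b = d then f.coeff b else 0 := by
  classical
  rw [homComp]
  rw [MvPolynomial.coeff_sum]
  simp_rw [MvPolynomial.coeff_monomial]
  rw [Finset.sum_ite_eq' (f.support.filter (fun a => degZ V a = d)) b (fun a => f.coeff a)]
  by_cases h1 : degZ V b = d
  · by_cases h2 : b ∈ f.support
    · simp [Finset.mem_filter, h1, h2]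
    · rw [MvPolynomial.notMem_support_iff] at h2
      simp [Finset.mem_filter, h1, h2]
  · simp [Finset.mem_filter, h1]

lemma support_homComp {K : Type*} [Field K] {n m : ℕ} (V : Matrix (Fin n) (Fin m) ℤ)
    (d : Fin n → ℤ) (f : MvPolynomial (Fin m) K) :
    (homComp K V d f).support = f.support.filter (fun a => degZ V a = d) := by
  classical
  ext a
  rw [MvPolynomial.mem_support_iff, coeff_homComp, Finset.mem_filter,
    MvPolynomial.mem_support_iff]
  by_cases h : degZ V a = d <;> simp [h, and_comm]

lemma wdeg_shift {n m : ℕ} (V : Matrix (Fin n) (Fin m) ℤ) (w : Fin m → ℝ) (l : Fin n → ℝ)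
    (a : Fin m →₀ ℕ) :
    wdeg (fun i => w i + ∑ k, l k * (V k i : ℝ)) a
      = wdeg w a + ∑ k, l k * ((degZ V a k : ℝ)) := by
  unfold wdeg degZ
  push_cast
  calc ∑ i, (w i + ∑ k, l k * (V k i : ℝ)) * (a i : ℝ)
      = ∑ i, (w i * (a i : ℝ) + ∑ k, l k * ((a i : ℝ) * (V k i : ℝ))) := by
        refine Finset.sum_congr rfl fun i _ => ?_
        rw [add_mul, Finset.sum_mul]
        congr 1
        exact Finset.sum_congr rfl fun k _ => by ring
    _ = (∑ i, w i * (a i : ℝ)) + ∑ i, ∑ k, l k * ((a i : ℝ) * (V k i : ℝ)) :=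
        Finset.sum_add_distrib
    _ = (∑ i, w i * (a i : ℝ)) + ∑ k, l k * ∑ j, (a j : ℝ) * (V k j : ℝ) := by
        congr 1
        rw [Finset.sum_comm]
        exact Finset.sum_congr rfl fun k _ => (Finset.mul_sum _ _ _).symm

lemma initialForm_shift {K : Type*} [Field K] {n m : ℕ} (V : Matrix (Fin n) (Fin m) ℤ)
    (w : Fin m → ℝ) (l : Fin n → ℝ) (f : MvPolynomial (Fin m) K) (d : Fin n → ℤ)
    (hf : ∀ a ∈ f.support, degZ V a = d) :
    initialForm (fun i => w i + ∑ k, l k * (V k i : ℝ)) f = initialForm w f := by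
  unfold initialForm
  congr 1
  refine Finset.filter_congr fun a ha => ?_
  constructor
  · intro h b hb
    have := h b hb
    rw [wdeg_shift, wdeg_shift, hf b hb, hf a ha, add_le_add_iff_right] at this
    exact this
  · intro h b hb
    rw [wdeg_shift, wdeg_shift, hf b hb, hf a ha, add_le_add_iff_right]
    exact h b hb

lemma initialForm_eq_sum_homComp {K : Type*} [Field K] {n m : ℕ} (V : Matrix (Fin n) (Fin m) ℤ)
    (w : Fin m → ℝ) (f : MvPolynomial (Fin m) K) :
    initialForm w f
      = ∑ d ∈ (f.support.filter (fun a => ∀ b ∈ f.support, wdeg w b ≤ wdeg w a)).image (degZ V),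
          initialForm w (homComp K V d f) := by
  classical
  set T := f.support.filter (fun a => ∀ b ∈ f.support, wdeg w b ≤ wdeg w a) with hT
  have key : ∀ d ∈ T.image (degZ V),
      initialForm w (homComp K V d f)
        = ∑ a ∈ T.filter (fun a => degZ V a = d), MvPolynomial.monomial a (f.coeff a) := by
    intro d hd
    obtain ⟨a0, ha0T, ha0d⟩ := Finset.mem_image.mp hd
    have ha0supp : a0 ∈ f.support := (Finset.mem_filter.mp ha0T).1
    have ha0max : ∀ b ∈ f.support, wdeg w b ≤ wdeg w a0 := (Finset.mem_filter.mp ha0T).2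
    unfold initialForm
    rw [support_homComp]
    have hset : (f.support.filter (fun a => degZ V a = d)).filter
        (fun a => ∀ b ∈ f.support.filter (fun a => degZ V a = d), wdeg w b ≤ wdeg w a)
        = T.filter (fun a => degZ V a = d) := by
      ext a
      simp only [Finset.mem_filter, hT]
      constructor
      · rintro ⟨⟨hasupp, had⟩, hmax⟩
        have h1 : wdeg w a0 ≤ wdeg w a := hmax a0 ⟨ha0supp, ha0d⟩
        exact ⟨⟨hasupp, fun b hb => le_trans (ha0max b hb) h1⟩, had⟩
      · rintro ⟨⟨hasupp, hamax⟩, had⟩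
        exact ⟨⟨hasupp, had⟩, fun b hb => hamax b hb.1⟩
    rw [hset]
    refine Finset.sum_congr rfl fun a ha => ?_
    have had : degZ V a = d := (Finset.mem_filter.mp ha).2
    rw [coeff_homComp, if_pos had]
  rw [Finset.sum_congr rfl key]
  unfold initialForm
  rw [← hT]
  exact (Finset.sum_fiberwise_of_maps_to (fun a ha => Finset.mem_image_of_mem (degZ V) ha)
    (fun a => MvPolynomial.monomial a (f.coeff a))).symm

lemma initialIdealW_shift_le {K : Type*} [Field K] {n m : ℕ} (V : Matrix (Fin n) (Fin m) ℤ)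
    (w : Fin m → ℝ) (l : Fin n → ℝ) :
    initialIdealW w (toricIdeal K V)
      ≤ initialIdealW (fun i => w i + ∑ k, l k * (V k i : ℝ)) (toricIdeal K V) := by
  classical
  rw [initialIdealW, Ideal.span_le]
  rintro g ⟨f, hf, rfl⟩
  rw [initialForm_eq_sum_homComp V w f]
  refine Ideal.sum_mem _ fun d hd => ?_
  have hhom : ∀ a ∈ (homComp K V d f).support, degZ V a = d := by
    intro a ha
    rw [support_homComp] at ha
    exact (Finset.mem_filter.mp ha).2
  rw [← initialForm_shift V w l (homComp K V d f) d hhom]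
  exact Ideal.subset_span ⟨homComp K V d f, homComp_mem V f hf d, rfl⟩

lemma initialIdealW_shift_eq {K : Type*} [Field K] {n m : ℕ} (V : Matrix (Fin n) (Fin m) ℤ)
    (w : Fin m → ℝ) (l : Fin n → ℝ) :
    initialIdealW w (toricIdeal K V)
      = initialIdealW (fun i => w i + ∑ k, l k * (V k i : ℝ)) (toricIdeal K V) := by
  refine le_antisymm (initialIdealW_shift_le V w l) ?_
  have h := initialIdealW_shift_le (K := K) V (fun i => w i + ∑ k, l k * (V k i : ℝ)) (-l)
  have heq : (fun i => (w i + ∑ k, l k * (V k i : ℝ)) + ∑ k, (-l) k * (V k i : ℝ)) = w := by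
    funext i
    simp only [Pi.neg_apply, neg_mul]
    rw [Finset.sum_neg_distrib]
    ring
  rwa [heq] at h


end Auxiliary

/-- For every `w ∈ W` generic for `I_V` there is a nonnegative
weight vector `c ∈ ℝᵐ_{≥0}` such that `in_w(I_V) = in_c(I_V)`. -/
theorem exists_nonneg_weight_same_initialIdeal
    (K : Type*) [Field K] [CharZero K]
    (n m : ℕ) (hnm : n < m) (V : Matrix (Fin n) (Fin m) ℤ)
    (hrank : V.rank = n)
    (hcomplete : ∀ b : Fin n → ℝ, ∃ u : Fin m → ℝ,
      (∀ i, 0 ≤ u i) ∧ (V.map (Int.cast : ℤ → ℝ)) *ᵥ u = b)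
    (w : Fin m → ℝ) (hw : w ∈ coneW V)
    (hgeneric : IsMonomialIdeal (initialIdealW w (toricIdeal K V))) :
    ∃ c : Fin m → ℝ, (∀ i, 0 ≤ c i) ∧
      initialIdealW w (toricIdeal K V) = initialIdealW c (toricIdeal K V) := by
  classical
  obtain ⟨u1, hu1nn, hu1V⟩ := hcomplete ((V.map (Int.cast : ℤ → ℝ)) *ᵥ (fun _ => (-1:ℝ)))
  set u0 : Fin m → ℝ := fun i => u1 i + 1 with hu0def
  have hu0pos : ∀ i, 0 < u0 i := fun i => by
    have := hu1nn i
    simp only [hu0def]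
    linarith
  have hu0ker : (V.map (Int.cast : ℤ → ℝ)) *ᵥ u0 = 0 := by
    have h1 : u0 = u1 + (fun _ => (1:ℝ)) := rfl
    rw [h1, Matrix.mulVec_add, hu1V, ← Matrix.mulVec_add]
    have h2 : ((fun _ => (-1:ℝ)) + (fun _ => (1:ℝ))) = (0 : Fin m → ℝ) := by
      funext i; simp
    rw [h2, Matrix.mulVec_zero]
  obtain ⟨c0, hc0⟩ := hw
  have hwU : ∀ u : Fin m → ℝ, (V.map (Int.cast : ℤ → ℝ)) *ᵥ u = 0 → (∀ i, 0 ≤ u i) →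
      0 ≤ ∑ i, w i * u i := by
    intro u hu hunn
    by_contra hneg
    push_neg at hneg
    have hdot : w ⬝ᵥ u = ∑ i, w i * u i := rfl
    have hwu : w ⬝ᵥ u < 0 := by rw [hdot]; exact hneg
    set t : ℝ := max 0 ((c0 - 1)/(w ⬝ᵥ u)) with ht
    have ht0 : 0 ≤ t := le_max_left _ _
    have htmem : t • u ∈ coneU V := by
      constructor
      · rw [Matrix.mulVec_smul, hu, smul_zero]
      · intro i; exact mul_nonneg ht0 (hunn i)
    have h1 := hc0 _ htmem
    have h1' : c0 ≤ t * (w ⬝ᵥ u) := by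
      have : w ⬝ᵥ (t • u) = t * (w ⬝ᵥ u) := by
        simp [dotProduct, Finset.mul_sum]
        exact Finset.sum_congr rfl fun i _ => by ring
      rwa [this] at h1
    have h2 : (c0 - 1)/(w ⬝ᵥ u) ≤ t := le_max_right _ _
    have h3 : t * (w ⬝ᵥ u) ≤ c0 - 1 := by
      rw [div_le_iff_of_neg hwu] at h2
      linarith
    linarith
  obtain ⟨l, hl⟩ := farkas (V.map (Int.cast : ℤ → ℝ))
    (lt_of_le_of_lt (Nat.zero_le n) hnm) u0 hu0pos hu0ker w hwU
  refine ⟨fun i => w i - ∑ k, l k * (V k i : ℝ), fun i => ?_, ?_⟩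
  · have h := hl i
    have hmap : ∀ k, (V.map (Int.cast : ℤ → ℝ)) k i = (V k i : ℝ) := fun k => rfl
    simp only [hmap] at h
    simp only
    linarith
  · have h := initialIdealW_shift_eq (K := K) V (fun i => w i - ∑ k, l k * (V k i : ℝ)) l
    have heq : (fun i => (w i - ∑ k, l k * (V k i : ℝ)) + ∑ k, l k * (V k i : ℝ)) = w := by
      funext i; ring
    rw [heq] at h
    exact h.symm
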